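/- (Eigenfunction shift between forward and backward operators.) Let $\omega_n(p) = \prod_{k=1}^n p^k \cdot \big(1 - \sum_{l=1}^n p^l\big)$. If $\phi \in C^2(\overline\Delta_n)$ satisfies $L_n \phi = -\lambda \phi$ on $\Delta_n$, then $\omega_n \phi$ vanishes on $\partial\Delta_n$ and satisfies $L_n^*(\omega_n \phi) = -\lambda\, \omega_n \phi$ on $\Delta_n$; conversely, if $L_n^*(\omega_n\phi) = -\lambda\,\omega_n\phi$ on $\Delta_n$ for $\phi \in C^2(\overline\Delta_n)$, then $L_n\phi = -\lambda\phi$ on $\Delta_n$. -/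

import Mathlib

open scoped BigOperators

noncomputable section

/-- The open standard orthogonal simplex in ℝⁿ. -/
def stdSimplexO (n : ℕ) : Set (Fin n → ℝ) :=
  {p | (∀ i, 0 < p i) ∧ ∑ i, p i < 1}

/-- The closed standard orthogonal simplex in ℝⁿ. -/
def stdSimplexC (n : ℕ) : Set (Fin n → ℝ) :=
  {p | (∀ i, 0 ≤ p i) ∧ ∑ i, p i ≤ 1}

/-- First partial derivative in coordinate direction `i`. -/
def pd {n : ℕ} (u : (Fin n → ℝ) → ℝ) (i : Fin n) (p : Fin n → ℝ) : ℝ :=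
  fderiv ℝ u p (Pi.single i 1)

/-- Second partial derivative `∂_j ∂_i`. -/
def pd2 {n : ℕ} (u : (Fin n → ℝ) → ℝ) (i j : Fin n) (p : Fin n → ℝ) : ℝ :=
  pd (pd u i) j p

/-- Kronecker delta. -/
def kdelta {n : ℕ} (i j : Fin n) : ℝ := if i = j then 1 else 0

/-- Kolmogorov backward (Wright–Fisher) operator `L_n^*`. -/
def Lb {n : ℕ} (u : (Fin n → ℝ) → ℝ) (p : Fin n → ℝ) : ℝ :=
  (1/2) * ∑ i, ∑ j, p i * (kdelta i j - p j) * pd2 u i j p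

/-- Kolmogorov forward (Wright–Fisher) operator `L_n`. -/
def Lf {n : ℕ} (u : (Fin n → ℝ) → ℝ) (p : Fin n → ℝ) : ℝ :=
  (1/2) * ∑ i, ∑ j, pd2 (fun q => q i * (kdelta i j - q j) * u q) i j p

/-- The weight function `ω_n(p) = ∏ p^k ⋅ (1 - ∑ p^l)`. -/
def omegaWF (n : ℕ) (p : Fin n → ℝ) : ℝ := (∏ k, p k) * (1 - ∑ l, p l)

namespace WFaux
variable {n : ℕ}

def PP (p : Fin n → ℝ) : ℝ := ∏ k, p k
def SS (p : Fin n → ℝ) : ℝ := ∑ k, p k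
def Pe (i : Fin n) (p : Fin n → ℝ) : ℝ := ∏ m ∈ Finset.univ.erase i, p m
def Pe2 (i j : Fin n) (p : Fin n → ℝ) : ℝ := ∏ m ∈ (Finset.univ.erase i).erase j, p m
def Wd (i : Fin n) (p : Fin n → ℝ) : ℝ := Pe i p * (1 - SS p) - PP p

lemma omega_eq (p : Fin n → ℝ) : omegaWF n p = PP p * (1 - SS p) := rfl

lemma R1 (i : Fin n) (p : Fin n → ℝ) : p i * Pe i p = PP p :=
  Finset.mul_prod_erase Finset.univ p (Finset.mem_univ i)

lemma R2 {i j : Fin n} (h : j ≠ i) (p : Fin n → ℝ) : p j * Pe2 i j p = Pe i p :=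
  Finset.mul_prod_erase (Finset.univ.erase i) p (Finset.mem_erase.mpr ⟨h, Finset.mem_univ j⟩)

lemma kdelta_self (i : Fin n) : kdelta i i = 1 := by simp [kdelta]
lemma kdelta_comm (i j : Fin n) : kdelta j i = kdelta i j := by
  by_cases h : i = j <;> simp [kdelta, h, eq_comm]
lemma kdelta_mul_self (i j : Fin n) : kdelta i j * kdelta i j = kdelta i j := by
  by_cases h : i = j <;> simp [kdelta, h]

lemma sum_pW (p : Fin n → ℝ) :
    ∑ j, p j * Wd j p = (n : ℝ) * (PP p * (1 - SS p)) - SS p * PP p := by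
  have h : ∀ j ∈ Finset.univ, p j * Wd j p = PP p * (1 - SS p) - p j * PP p := by
    intro j _
    have := R1 j p
    unfold Wd
    linear_combination (1 - SS p) * this
  rw [Finset.sum_congr rfl h, Finset.sum_sub_distrib, Finset.sum_const, ← Finset.sum_mul]
  simp only [Finset.card_univ, Fintype.card_fin, nsmul_eq_mul]
  show _ = _
  unfold SS
  ring

lemma inner3 (p : Fin n → ℝ) (i : Fin n) :
    ∑ j, (p i * (kdelta i j - p j) * Wd j p
      - omegaWF n p * ((kdelta i j - kdelta i j * p j) - p i)) = 0 := by
  have hsplit : ∀ j, p i * (kdelta i j - p j) * Wd j p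
      - omegaWF n p * ((kdelta i j - kdelta i j * p j) - p i)
      = (if j = i then (p i * Wd i p - omegaWF n p + omegaWF n p * p i) else 0)
        + ((- p i) * (p j * Wd j p) + omegaWF n p * p i) := by
    intro j
    by_cases h : j = i
    · subst h; rw [if_pos rfl, kdelta_self]; ring
    · have hk : kdelta i j = 0 := if_neg (fun hh => h hh.symm)
      rw [if_neg h, hk]; ring
  rw [Finset.sum_congr rfl (fun j _ => hsplit j), Finset.sum_add_distrib,
    Finset.sum_ite_eq' Finset.univ i _, Finset.sum_add_distrib, ← Finset.mul_sum,
    Finset.sum_const, sum_pW]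
  simp only [Finset.mem_univ, if_pos, Finset.card_univ, Fintype.card_fin, nsmul_eq_mul,
    omega_eq, Wd]
  linear_combination (1 - SS p) * R1 i p

lemma inner2 (p : Fin n → ℝ) (j : Fin n) :
    ∑ i, (p i * (kdelta i j - p j) * Wd i p
      - omegaWF n p * ((kdelta i j - p j) - kdelta i j * p i)) = 0 := by
  have hsplit : ∀ i, p i * (kdelta i j - p j) * Wd i p
      - omegaWF n p * ((kdelta i j - p j) - kdelta i j * p i)
      = (if i = j then (p j * Wd j p - omegaWF n p + omegaWF n p * p j) else 0)
        + ((- p j) * (p i * Wd i p) + omegaWF n p * p j) := by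
    intro i
    by_cases h : i = j
    · subst h; rw [if_pos rfl, kdelta_self]; ring
    · have hk : kdelta i j = 0 := if_neg h
      rw [if_neg h, hk]; ring
  rw [Finset.sum_congr rfl (fun i _ => hsplit i), Finset.sum_add_distrib,
    Finset.sum_ite_eq' Finset.univ j _, Finset.sum_add_distrib, ← Finset.mul_sum,
    Finset.sum_const, sum_pW]
  simp only [Finset.mem_univ, if_pos, Finset.card_univ, Fintype.card_fin, nsmul_eq_mul,
    omega_eq, Wd]
  linear_combination (1 - SS p) * R1 j p

lemma sum_ite_ne (i : Fin n) (c : ℝ) :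
    ∑ j, (if j = i then (0:ℝ) else c) = ((n : ℝ) - 1) * c := by
  rw [← Finset.add_sum_erase _ _ (Finset.mem_univ i), if_pos rfl]
  have h : ∀ j ∈ Finset.univ.erase i, (if j = i then (0:ℝ) else c) = c := by
    intro j hj; rw [if_neg (Finset.mem_erase.mp hj).1]
  rw [Finset.sum_congr rfl h, Finset.sum_const, Finset.card_erase_of_mem (Finset.mem_univ i),
    Finset.card_univ, Fintype.card_fin, nsmul_eq_mul, Nat.cast_sub i.pos, Nat.cast_one,
    zero_add]

lemma suma_i (p : Fin n → ℝ) (i : Fin n) :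
    ∑ j, p i * (kdelta i j - p j) = p i - p i * SS p := by
  have h : ∀ j, p i * (kdelta i j - p j) = (if j = i then p i else 0) + (-(p i * p j)) := by
    intro j
    by_cases hh : j = i
    · subst hh; rw [if_pos rfl, kdelta_self]; ring
    · have hk : kdelta i j = 0 := if_neg (fun hhh => hh hhh.symm)
      rw [if_neg hh, hk]; ring
  rw [Finset.sum_congr rfl (fun j _ => h j), Finset.sum_add_distrib,
    Finset.sum_ite_eq' Finset.univ i _]
  simp only [Finset.mem_univ, if_pos, Finset.sum_neg_distrib, ← Finset.mul_sum]
  show _ = _ - _ * SS p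
  unfold SS
  ring

lemma suma_j (p : Fin n → ℝ) (j : Fin n) :
    ∑ i, p i * (kdelta i j - p j) = p j - p j * SS p := by
  have h : ∀ i, p i * (kdelta i j - p j) = (if i = j then p j else 0) + (-(p j * p i)) := by
    intro i
    by_cases hh : i = j
    · subst hh; rw [if_pos rfl, kdelta_self]; ring
    · have hk : kdelta i j = 0 := if_neg hh
      rw [if_neg hh, hk]; ring
  rw [Finset.sum_congr rfl (fun i _ => h i), Finset.sum_add_distrib,
    Finset.sum_ite_eq' Finset.univ j _]
  simp only [Finset.mem_univ, if_pos, Finset.sum_neg_distrib, ← Finset.mul_sum]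
  show _ = _ - _ * SS p
  unfold SS
  ring

lemma inner1 (p : Fin n → ℝ) :
    ∑ i, ∑ j, (p i * (kdelta i j - p j) * (if j = i then 0 else Pe2 i j p * (1 - SS p))
      + (-(p i * (kdelta i j - p j) * Pe i p)) + (-(p i * (kdelta i j - p j) * Pe j p))
      + omegaWF n p * (1 + kdelta i j)) = 0 := by
  simp only [Finset.sum_add_distrib]
  -- T1
  have hT1 : ∀ i : Fin n, ∑ j, p i * (kdelta i j - p j)
      * (if j = i then 0 else Pe2 i j p * (1 - SS p)) = ((n:ℝ) - 1) * (-(PP p * (1 - SS p))) := by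
    intro i
    have h : ∀ j, p i * (kdelta i j - p j) * (if j = i then 0 else Pe2 i j p * (1 - SS p))
        = (if j = i then (0:ℝ) else -(PP p * (1 - SS p))) := by
      intro j
      by_cases hh : j = i
      · rw [if_pos hh, if_pos hh]; ring
      · have hk : kdelta i j = 0 := if_neg (fun hhh => hh hhh.symm)
        rw [if_neg hh, if_neg hh, hk]
        linear_combination (-(p i) * (1 - SS p)) * R2 hh p + (-(1 - SS p)) * R1 i p
    rw [Finset.sum_congr rfl (fun j _ => h j), sum_ite_ne]
  -- T2
  have hT2 : ∀ i : Fin n, ∑ j, (-(p i * (kdelta i j - p j) * Pe i p))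
      = -(PP p * (1 - SS p)) := by
    intro i
    rw [Finset.sum_neg_distrib, ← Finset.sum_mul, suma_i]
    linear_combination (-(1 - SS p)) * R1 i p
  -- T3 inner (for fixed j, sum over i)
  have hT3 : ∀ j : Fin n, ∑ i, (-(p i * (kdelta i j - p j) * Pe j p))
      = -(PP p * (1 - SS p)) := by
    intro j
    rw [Finset.sum_neg_distrib, ← Finset.sum_mul, suma_j]
    linear_combination (-(1 - SS p)) * R1 j p
  -- T4
  have hT4 : ∀ i : Fin n, ∑ j, omegaWF n p * (1 + kdelta i j)
      = (n:ℝ) * omegaWF n p + omegaWF n p := by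
    intro i
    have h : ∀ j, omegaWF n p * (1 + kdelta i j)
        = omegaWF n p + (if i = j then omegaWF n p else 0) := by
      intro j
      by_cases hh : i = j
      · rw [if_pos hh, hh, kdelta_self]; ring
      · have hk : kdelta i j = 0 := if_neg hh
        rw [if_neg hh, hk]; ring
    rw [Finset.sum_congr rfl (fun j _ => h j), Finset.sum_add_distrib, Finset.sum_const,
      Finset.sum_ite_eq Finset.univ i _]
    simp [Finset.card_univ, mul_comm]
  rw [Finset.sum_congr rfl (fun i _ => hT1 i),
    Finset.sum_congr rfl (fun i _ => hT2 i),
    Finset.sum_comm (f := fun i j => -(p i * (kdelta i j - p j) * Pe j p)),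
    Finset.sum_congr rfl (fun j _ => hT3 j),
    Finset.sum_congr rfl (fun i _ => hT4 i)]
  simp only [Finset.sum_const, Finset.card_univ, Fintype.card_fin, nsmul_eq_mul, omega_eq]
  ring


lemma sum_sum_mul (c : Fin n → Fin n → ℝ) (Φ : ℝ) :
    ∑ i, ∑ j, c i j * Φ = (∑ i, ∑ j, c i j) * Φ := by
  rw [Finset.sum_mul]
  exact Finset.sum_congr rfl fun i _ => by rw [Finset.sum_mul]

lemma core (p : Fin n → ℝ) (Φ : ℝ) (D : Fin n → ℝ) (E : Fin n → Fin n → ℝ) :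
    ∑ i, ∑ j, (p i * (kdelta i j - p j) *
      ((((if j = i then 0 else Pe2 i j p * (1 - SS p)) - Pe i p - Pe j p)) * Φ
        + Wd i p * D j + Wd j p * D i + omegaWF n p * E i j))
    = ∑ i, ∑ j, (omegaWF n p *
      ((-1 - kdelta i j) * Φ
        + ((kdelta i j - p j) - kdelta i j * p i) * D j
        + ((kdelta i j - kdelta i j * p j) - p i) * D i
        + p i * (kdelta i j - p j) * E i j)) := by
  rw [← sub_eq_zero, ← Finset.sum_sub_distrib]
  simp only [← Finset.sum_sub_distrib]
  have hterm : ∀ i j, (p i * (kdelta i j - p j) *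
      ((((if j = i then 0 else Pe2 i j p * (1 - SS p)) - Pe i p - Pe j p)) * Φ
        + Wd i p * D j + Wd j p * D i + omegaWF n p * E i j))
      - (omegaWF n p *
      ((-1 - kdelta i j) * Φ
        + ((kdelta i j - p j) - kdelta i j * p i) * D j
        + ((kdelta i j - kdelta i j * p j) - p i) * D i
        + p i * (kdelta i j - p j) * E i j))
      = (p i * (kdelta i j - p j) * (if j = i then 0 else Pe2 i j p * (1 - SS p))
          + (-(p i * (kdelta i j - p j) * Pe i p)) + (-(p i * (kdelta i j - p j) * Pe j p))
          + omegaWF n p * (1 + kdelta i j)) * Φ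
        + (p i * (kdelta i j - p j) * Wd i p
            - omegaWF n p * ((kdelta i j - p j) - kdelta i j * p i)) * D j
        + (p i * (kdelta i j - p j) * Wd j p
            - omegaWF n p * ((kdelta i j - kdelta i j * p j) - p i)) * D i := by
    intro i j; ring
  rw [Finset.sum_congr rfl (fun i _ => Finset.sum_congr rfl (fun j _ => hterm i j))]
  simp only [Finset.sum_add_distrib]
  rw [sum_sum_mul, inner1 p, zero_mul, Finset.sum_comm
      (f := fun i j => (p i * (kdelta i j - p j) * Wd i p
        - omegaWF n p * ((kdelta i j - p j) - kdelta i j * p i)) * D j),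
    Finset.sum_eq_zero (fun j _ => by rw [← Finset.sum_mul, inner2 p j, zero_mul]),
    Finset.sum_eq_zero (fun i _ => by rw [← Finset.sum_mul, inner3 p i, zero_mul])]
  ring


lemma pd_hasFDeriv {u : (Fin n → ℝ) → ℝ} {L : (Fin n → ℝ) →L[ℝ] ℝ} {p} (h : HasFDerivAt u L p)
    (i : Fin n) : pd u i p = L (Pi.single i 1) := by rw [pd, h.fderiv]

lemma pd_coord (j i : Fin n) (p : Fin n → ℝ) :
    pd (fun q => q j) i p = if j = i then 1 else 0 := by
  have h : HasFDerivAt (fun q : Fin n → ℝ => q j)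
      (ContinuousLinearMap.proj j : (Fin n → ℝ) →L[ℝ] ℝ) p :=
    (ContinuousLinearMap.proj j : (Fin n → ℝ) →L[ℝ] ℝ).hasFDerivAt
  rw [pd_hasFDeriv h i]
  simp [Pi.single_apply]

lemma pd_mul {u v : (Fin n → ℝ) → ℝ} {p} (hu : DifferentiableAt ℝ u p)
    (hv : DifferentiableAt ℝ v p) (i : Fin n) :
    pd (fun q => u q * v q) i p = pd u i p * v p + u p * pd v i p := by
  rw [pd, (hu.hasFDerivAt.fun_mul hv.hasFDerivAt).fderiv]
  simp [pd]; ring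

lemma pd_add {u v : (Fin n → ℝ) → ℝ} {p} (hu : DifferentiableAt ℝ u p)
    (hv : DifferentiableAt ℝ v p) (i : Fin n) :
    pd (fun q => u q + v q) i p = pd u i p + pd v i p := by
  rw [pd, fderiv_fun_add hu hv]; rfl

lemma pd_sub {u v : (Fin n → ℝ) → ℝ} {p} (hu : DifferentiableAt ℝ u p)
    (hv : DifferentiableAt ℝ v p) (i : Fin n) :
    pd (fun q => u q - v q) i p = pd u i p - pd v i p := by
  rw [pd, fderiv_fun_sub hu hv]; rfl

lemma pd_const (c : ℝ) (i : Fin n) (p : Fin n → ℝ) : pd (fun _ => c) i p = 0 := by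
  rw [pd, fderiv_const_apply]; rfl

lemma hasFDerivAt_sumfun (p : Fin n → ℝ) :
    HasFDerivAt (fun q : Fin n → ℝ => ∑ k, q k)
      (∑ k, (ContinuousLinearMap.proj k : (Fin n → ℝ) →L[ℝ] ℝ)) p := by
  have := HasFDerivAt.fun_sum (𝕜 := ℝ) (x := p) (u := (Finset.univ : Finset (Fin n)))
    (A := fun k (q : Fin n → ℝ) => q k)
    (A' := fun k => (ContinuousLinearMap.proj k : (Fin n → ℝ) →L[ℝ] ℝ))
    (fun k _ => (ContinuousLinearMap.proj k : (Fin n → ℝ) →L[ℝ] ℝ).hasFDerivAt)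
  exact this

lemma dsum : Differentiable ℝ (fun q : Fin n → ℝ => ∑ k, q k) :=
  fun p => (hasFDerivAt_sumfun p).differentiableAt

lemma pd_sum (i : Fin n) (p : Fin n → ℝ) : pd (fun q => ∑ k, q k) i p = 1 := by
  rw [pd_hasFDeriv (hasFDerivAt_sumfun p) i]
  simp [Pi.single_apply]

lemma hasFDerivAt_prodfun (t : Finset (Fin n)) (p : Fin n → ℝ) :
    HasFDerivAt (fun q : Fin n → ℝ => ∏ k ∈ t, q k)
      (∑ k ∈ t, (∏ m ∈ t.erase k, p m) • (ContinuousLinearMap.proj k : (Fin n → ℝ) →L[ℝ] ℝ)) p := by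
  have := HasFDerivAt.finset_prod (u := t) (g := fun k (q : Fin n → ℝ) => q k)
    (g' := fun k => (ContinuousLinearMap.proj k : (Fin n → ℝ) →L[ℝ] ℝ)) (x := p)
    (fun k _ => (ContinuousLinearMap.proj k : (Fin n → ℝ) →L[ℝ] ℝ).hasFDerivAt)
  exact this

lemma diff_prodfun (t : Finset (Fin n)) :
    Differentiable ℝ (fun q : Fin n → ℝ => ∏ k ∈ t, q k) :=
  fun p => (hasFDerivAt_prodfun t p).differentiableAt

lemma pd_prod (t : Finset (Fin n)) (i : Fin n) (p : Fin n → ℝ) :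
    pd (fun q => ∏ k ∈ t, q k) i p = if i ∈ t then ∏ m ∈ t.erase i, p m else 0 := by
  rw [pd_hasFDeriv (hasFDerivAt_prodfun t p) i]
  simp only [ContinuousLinearMap.sum_apply, ContinuousLinearMap.smul_apply,
    ContinuousLinearMap.proj_apply, Pi.single_apply, smul_eq_mul, mul_ite, mul_one, mul_zero]
  exact Finset.sum_ite_eq' t i (fun k => ∏ m ∈ t.erase k, p m)

lemma pd2_mul {A φ : (Fin n → ℝ) → ℝ} {p : Fin n → ℝ} (hA : Differentiable ℝ A)
    (hA' : ∀ k, Differentiable ℝ (pd A k)) (hφ : ContDiffAt ℝ 2 φ p) (i j : Fin n) :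
    pd2 (fun q => A q * φ q) i j p =
      pd2 A i j p * φ p + pd A i p * pd φ j p + pd A j p * pd φ i p + A p * pd2 φ i j p := by
  obtain ⟨u, hu, hcd⟩ := hφ.contDiffOn le_rfl (by simp)
  obtain ⟨U, hUu, hUo, hpU⟩ := mem_nhds_iff.mp hu
  have hφU : ContDiffOn ℝ 2 φ U := hcd.mono hUu
  have hdφ : ∀ q ∈ U, DifferentiableAt ℝ φ q := fun q hq =>
    (hφU.contDiffAt (hUo.mem_nhds hq)).differentiableAt two_ne_zero
  have hdpφ : ∀ k, DifferentiableAt ℝ (pd φ k) p := by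
    intro k
    have h1 : ContDiffOn ℝ 1 (fderiv ℝ φ) U := hφU.fderiv_of_isOpen hUo le_rfl
    have h2 : DifferentiableOn ℝ (fderiv ℝ φ) U := h1.differentiableOn one_ne_zero
    have h3 : DifferentiableOn ℝ (pd φ k) U := by
      intro q hq
      exact ((h2 q hq).clm_apply (differentiableWithinAt_const _))
    exact (h3 p hpU).differentiableAt (hUo.mem_nhds hpU)
  have heq : pd (fun q => A q * φ q) i =ᶠ[nhds p] fun q => pd A i q * φ q + A q * pd φ i q := by
    filter_upwards [hUo.mem_nhds hpU] with q hq
    exact pd_mul (hA q) (hdφ q hq) i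
  have h4 : pd2 (fun q => A q * φ q) i j p
      = pd (fun q => pd A i q * φ q + A q * pd φ i q) j p := by
    rw [pd2, pd, heq.fderiv_eq]; rfl
  rw [h4,
    pd_add ((hA' i p).fun_mul (hdφ p hpU)) ((hA p).fun_mul (hdpφ i)),
    pd_mul (hA' i p) (hdφ p hpU), pd_mul (hA p) (hdpφ i)]
  simp only [pd2]; ring

-- derivatives of omegaWF
lemma diff_omega : Differentiable ℝ (omegaWF n) := by
  have : omegaWF n = fun q : Fin n → ℝ => (∏ k, q k) * (1 - ∑ l, q l) := rfl
  rw [this]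
  exact (diff_prodfun Finset.univ).mul ((differentiable_const (1:ℝ)).sub dsum)

lemma pd_one_sub_sum (k : Fin n) (p : Fin n → ℝ) :
    pd (fun q : Fin n → ℝ => 1 - ∑ l, q l) k p = -1 := by
  rw [pd_sub (differentiableAt_const (1:ℝ)) (dsum p), pd_const, pd_sum]
  ring

lemma pd_omega (k : Fin n) (p : Fin n → ℝ) : pd (omegaWF n) k p = Wd k p := by
  have ho : omegaWF n = fun q : Fin n → ℝ => (∏ m, q m) * (1 - ∑ l, q l) := rfl
  rw [ho, pd_mul ((diff_prodfun Finset.univ) p) (((differentiable_const (1:ℝ)).fun_sub dsum) p) k,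
    pd_prod, pd_one_sub_sum, if_pos (Finset.mem_univ k)]
  unfold Wd Pe PP SS
  ring

lemma pd_omega_fun (k : Fin n) : pd (omegaWF n) k = fun p => Wd k p :=
  funext fun p => pd_omega k p

lemma diff_Wd (k : Fin n) : Differentiable ℝ (fun p => Wd k p) := by
  unfold Wd Pe PP SS
  exact ((diff_prodfun _).mul ((differentiable_const (1:ℝ)).sub dsum)).sub
    (diff_prodfun Finset.univ)

lemma diff_pd_omega (k : Fin n) : Differentiable ℝ (pd (omegaWF n) k) := by
  rw [pd_omega_fun k]; exact diff_Wd k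

lemma pd2_omega (k l : Fin n) (p : Fin n → ℝ) :
    pd2 (omegaWF n) k l p
      = (if l = k then 0 else Pe2 k l p * (1 - SS p)) - Pe k p - Pe l p := by
  rw [pd2, pd_omega_fun k]
  have hW : (fun p : Fin n → ℝ => Wd k p)
      = fun q => (∏ m ∈ Finset.univ.erase k, q m) * (1 - ∑ l, q l) - ∏ m, q m := rfl
  rw [hW, pd_sub (((diff_prodfun _).fun_mul ((differentiable_const (1:ℝ)).fun_sub dsum)) p)
      ((diff_prodfun Finset.univ) p),
    pd_mul ((diff_prodfun _) p) (((differentiable_const (1:ℝ)).fun_sub dsum) p),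
    pd_prod, pd_prod, pd_one_sub_sum, if_pos (Finset.mem_univ l)]
  have hmem : (if l ∈ Finset.univ.erase k then ∏ m ∈ (Finset.univ.erase k).erase l, p m else 0)
      = (if l = k then 0 else Pe2 k l p) := by
    by_cases h : l = k
    · rw [if_pos h, if_neg (fun hc => (Finset.mem_erase.mp hc).1 h)]
    · rw [if_neg h, if_pos (Finset.mem_erase.mpr ⟨h, Finset.mem_univ l⟩)]
      rfl
  rw [hmem]
  unfold Pe SS
  by_cases h : l = k
  · rw [if_pos h, if_pos h]; ring
  · rw [if_neg h, if_neg h]; ring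

-- derivatives of the drift coefficient function
lemma dcoord (i : Fin n) : Differentiable ℝ (fun q : Fin n → ℝ => q i) :=
  (ContinuousLinearMap.proj i : (Fin n → ℝ) →L[ℝ] ℝ).differentiable

lemma diff_affine (i j : Fin n) (c : ℝ) :
    Differentiable ℝ (fun q : Fin n → ℝ => q i * (c - q j)) :=
  (dcoord i).mul ((differentiable_const c).sub (dcoord j))

lemma pd_affine (i j k : Fin n) (c : ℝ) (p : Fin n → ℝ) :
    pd (fun q => q i * (c - q j)) k p = kdelta i k * (c - p j) - kdelta j k * p i := by
  rw [pd_mul ((dcoord i) p) (((differentiable_const c).fun_sub (dcoord j)) p) k, pd_coord,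
    pd_sub (differentiableAt_const c) ((dcoord j) p), pd_const, pd_coord]
  unfold kdelta
  ring

lemma pd_affine_fun (i j k : Fin n) (c : ℝ) :
    pd (fun q => q i * (c - q j)) k = fun p => kdelta i k * (c - p j) - kdelta j k * p i :=
  funext fun p => pd_affine i j k c p

lemma diff_pd_affine (i j : Fin n) (c : ℝ) (k : Fin n) :
    Differentiable ℝ (pd (fun q => q i * (c - q j)) k) := by
  rw [pd_affine_fun i j k c]
  exact ((differentiable_const _).mul ((differentiable_const c).sub (dcoord j))).sub
    ((differentiable_const _).mul (dcoord i))

lemma pd2_affine (i j k l : Fin n) (c : ℝ) (p : Fin n → ℝ) :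
    pd2 (fun q => q i * (c - q j)) k l p
      = -(kdelta i k * kdelta j l) - kdelta j k * kdelta i l := by
  rw [pd2, pd_affine_fun i j k c]
  have h : (fun p : Fin n → ℝ => kdelta i k * (c - p j) - kdelta j k * p i)
      = fun p : Fin n → ℝ => (fun q : Fin n → ℝ => kdelta i k * (c - q j)) p
          - (fun q : Fin n → ℝ => kdelta j k * q i) p := rfl
  rw [h, pd_sub (((differentiable_const _).fun_mul ((differentiable_const c).fun_sub (dcoord j))) p)
      (((differentiable_const _).fun_mul (dcoord i)) p),
    pd_mul ((differentiable_const (kdelta i k)) p) (((differentiable_const c).fun_sub (dcoord j)) p),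
    pd_mul ((differentiable_const (kdelta j k)) p) ((dcoord i) p),
    pd_sub (differentiableAt_const c) ((dcoord j) p), pd_const, pd_const, pd_const, pd_coord, pd_coord]
  unfold kdelta
  ring

lemma pd2_affine_diag (i j : Fin n) (p : Fin n → ℝ) :
    pd2 (fun q => q i * (kdelta i j - q j)) i j p = -1 - kdelta i j := by
  rw [pd2_affine i j i j (kdelta i j) p, kdelta_self, kdelta_self]
  by_cases h : i = j
  · subst h; rw [kdelta_self]; ring
  · have h1 : kdelta i j = 0 := if_neg h
    have h2 : kdelta j i = 0 := if_neg (fun hc => h hc.symm)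
    rw [h1, h2]; ring

lemma pd_affine_i (i j : Fin n) (p : Fin n → ℝ) :
    pd (fun q => q i * (kdelta i j - q j)) i p = (kdelta i j - p j) - kdelta i j * p i := by
  rw [pd_affine i j i (kdelta i j) p, kdelta_self, kdelta_comm]
  ring

lemma pd_affine_j (i j : Fin n) (p : Fin n → ℝ) :
    pd (fun q => q i * (kdelta i j - q j)) j p
      = (kdelta i j - kdelta i j * p j) - p i := by
  rw [pd_affine i j j (kdelta i j) p, kdelta_self]
  by_cases h : i = j
  · subst h; rw [kdelta_self]; ring
  · have h1 : kdelta i j = 0 := if_neg h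
    rw [h1]; ring

lemma sum_sum_cmul (c : ℝ) (g : Fin n → Fin n → ℝ) :
    ∑ i, ∑ j, c * g i j = c * ∑ i, ∑ j, g i j := by
  rw [Finset.mul_sum]
  exact Finset.sum_congr rfl fun i _ => by rw [Finset.mul_sum]

lemma key (φ : (Fin n → ℝ) → ℝ) (p : Fin n → ℝ) (hφp : ContDiffAt ℝ 2 φ p) :
    Lb (fun q => omegaWF n q * φ q) p = omegaWF n p * Lf φ p := by
  have hL : ∀ i j : Fin n, p i * (kdelta i j - p j) * pd2 (fun q => omegaWF n q * φ q) i j p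
      = p i * (kdelta i j - p j) *
        ((((if j = i then 0 else Pe2 i j p * (1 - SS p)) - Pe i p - Pe j p)) * φ p
          + Wd i p * pd φ j p + Wd j p * pd φ i p + omegaWF n p * pd2 φ i j p) := by
    intro i j
    rw [pd2_mul diff_omega diff_pd_omega hφp i j, pd2_omega, pd_omega, pd_omega]
  have hR : ∀ i j : Fin n, pd2 (fun q => q i * (kdelta i j - q j) * φ q) i j p
      = (-1 - kdelta i j) * φ p
        + ((kdelta i j - p j) - kdelta i j * p i) * pd φ j p
        + ((kdelta i j - kdelta i j * p j) - p i) * pd φ i p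
        + p i * (kdelta i j - p j) * pd2 φ i j p := by
    intro i j
    rw [pd2_mul (diff_affine i j (kdelta i j)) (diff_pd_affine i j (kdelta i j)) hφp i j,
      pd2_affine_diag, pd_affine_i, pd_affine_j]
  rw [Lb, Lf,
    Finset.sum_congr rfl (fun i _ => Finset.sum_congr rfl (fun j _ => hL i j)),
    Finset.sum_congr rfl (fun i _ => Finset.sum_congr rfl (fun j _ => hR i j)),
    core p (φ p) (fun k => pd φ k p) (fun i j => pd2 φ i j p),
    sum_sum_cmul]
  ring

-- topology
lemma isOpen_O : IsOpen (stdSimplexO n) := by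
  have h : stdSimplexO n
      = (⋂ i, {p : Fin n → ℝ | 0 < p i}) ∩ {p : Fin n → ℝ | ∑ i, p i < 1} := by
    ext p; simp [stdSimplexO, Set.mem_iInter]
  rw [h]
  exact (isOpen_iInter_of_finite fun i =>
      isOpen_lt continuous_const (continuous_apply i)).inter
    (isOpen_lt (continuous_finset_sum _ fun i _ => continuous_apply i) continuous_const)

lemma isClosed_C : IsClosed (stdSimplexC n) := by
  have h : stdSimplexC n
      = (⋂ i, {p : Fin n → ℝ | 0 ≤ p i}) ∩ {p : Fin n → ℝ | ∑ i, p i ≤ 1} := by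
    ext p; simp [stdSimplexC, Set.mem_iInter]
  rw [h]
  exact (isClosed_iInter fun i =>
      isClosed_le continuous_const (continuous_apply i)).inter
    (isClosed_le (continuous_finset_sum _ fun i _ => continuous_apply i) continuous_const)

lemma O_subset_C : stdSimplexO n ⊆ stdSimplexC n :=
  fun p hp => ⟨fun i => (hp.1 i).le, hp.2.le⟩

lemma omega_pos {p : Fin n → ℝ} (hp : p ∈ stdSimplexO n) : 0 < omegaWF n p := by
  have h1 : 0 < ∏ k, p k := Finset.prod_pos fun i _ => hp.1 i
  have h2 : (0:ℝ) < 1 - ∑ l, p l := by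
    have := hp.2; linarith [this]
  exact mul_pos h1 h2

lemma frontier_omega {p : Fin n → ℝ} (hp : p ∈ frontier (stdSimplexC n)) :
    omegaWF n p = 0 := by
  by_contra h
  have hpC : p ∈ stdSimplexC n := isClosed_C.frontier_subset hp
  have hmul := mul_ne_zero_iff.mp h
  have hprod : ∀ i, p i ≠ 0 := fun i =>
    Finset.prod_ne_zero_iff.mp hmul.1 i (Finset.mem_univ i)
  have hO : p ∈ stdSimplexO n := by
    refine ⟨fun i => lt_of_le_of_ne (hpC.1 i) (Ne.symm (hprod i)), ?_⟩
    rcases lt_or_eq_of_le hpC.2 with h1 | h1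
    · exact h1
    · exact absurd (by rw [h1]; ring) hmul.2
  have hint : p ∈ interior (stdSimplexC n) :=
    interior_maximal O_subset_C isOpen_O hO
  rw [isClosed_C.frontier_eq] at hp
  exact hp.2 hint

end WFaux

/-- Eigenfunction shift between the forward and backward operators. -/
theorem stmt12 (n : ℕ) (lam : ℝ) (φ : (Fin n → ℝ) → ℝ)
    (hφ : ContDiffOn ℝ 2 φ (stdSimplexC n)) :
    ((∀ p ∈ stdSimplexO n, Lf φ p = -lam * φ p) →
      (∀ p ∈ frontier (stdSimplexC n), omegaWF n p * φ p = 0) ∧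
      (∀ p ∈ stdSimplexO n,
        Lb (fun q => omegaWF n q * φ q) p = -lam * (omegaWF n p * φ p))) ∧
    ((∀ p ∈ stdSimplexO n,
        Lb (fun q => omegaWF n q * φ q) p = -lam * (omegaWF n p * φ p)) →
      ∀ p ∈ stdSimplexO n, Lf φ p = -lam * φ p) := by
  have cda : ∀ p ∈ stdSimplexO n, ContDiffAt ℝ 2 φ p := by
    intro p hp
    exact hφ.contDiffAt
      (mem_nhds_iff.mpr ⟨stdSimplexO n, WFaux.O_subset_C, WFaux.isOpen_O, hp⟩)
  constructor
  · intro hf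
    constructor
    · intro p hp
      rw [WFaux.frontier_omega hp, zero_mul]
    · intro p hp
      rw [WFaux.key φ p (cda p hp), hf p hp]
      ring
  · intro hb p hp
    have h1 := hb p hp
    rw [WFaux.key φ p (cda p hp)] at h1
    have hω : omegaWF n p ≠ 0 := (WFaux.omega_pos hp).ne'
    have h2 : omegaWF n p * Lf φ p = omegaWF n p * (-lam * φ p) := by
      rw [h1]; ring
    exact mul_left_cancel₀ hω h2
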